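/- Assume Ω ∈ (0, π/2). Let (M, θ) be an admissible curve with plane curve Z = (x̂, ŷ) and maximal curvature e ≤ 1/R_a, so that M ≥ l, and set ζ₀ := −(x̂(l) − R_a sin Ω)·sin Ω + (ŷ(l) − R_a (1 − cos Ω))·cos Ω. If ζ₀ = 0, then e = 1/R_a, M = L₀, and θ = φ₀ on [0, L₀]; that is, the curve (M, θ) coincides with the arc-then-segment curve (L₀, φ₀). -/

import Mathlib

open Real

/-- `φ` is `K`-Lipschitz on `[0, L]`. -/
def LipOn (φ : ℝ → ℝ) (L K : ℝ) : Prop :=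
  ∀ s ∈ Set.Icc (0:ℝ) L, ∀ t ∈ Set.Icc (0:ℝ) L, |φ s - φ t| ≤ K * |s - t|

/-- The maximal curvature of the curve `(L, φ)`: the least Lipschitz constant of `φ`
(essential supremum of `φ'`) on `[0, L]`. -/
noncomputable def maxCurv (φ : ℝ → ℝ) (L : ℝ) : ℝ :=
  sInf {K : ℝ | 0 ≤ K ∧ LipOn φ L K}

/-- An admissible curve for the data `(Ω, b₁, b₂)` : a pair `(L, φ)` with `L > 0`,
`φ` nondecreasing and Lipschitz on `[0, L]`, `φ 0 = 0`, `φ L = Ω`,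
`∫₀^L cos (φ s) ds = b₁` and `∫₀^L sin (φ s) ds = b₂`. -/
def Admissible (Ω b₁ b₂ L : ℝ) (φ : ℝ → ℝ) : Prop :=
  0 < L ∧ MonotoneOn φ (Set.Icc 0 L) ∧ (∃ K : ℝ, 0 ≤ K ∧ LipOn φ L K) ∧
  φ 0 = 0 ∧ φ L = Ω ∧
  (∫ s in (0:ℝ)..L, Real.cos (φ s)) = b₁ ∧
  (∫ s in (0:ℝ)..L, Real.sin (φ s)) = b₂

/-- First coordinate of the associated plane curve. -/
noncomputable def xcoord (φ : ℝ → ℝ) (s : ℝ) : ℝ := ∫ t in (0:ℝ)..s, Real.cos (φ t)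

/-- Second coordinate of the associated plane curve. -/
noncomputable def ycoord (φ : ℝ → ℝ) (s : ℝ) : ℝ := ∫ t in (0:ℝ)..s, Real.sin (φ t)

/-- If `Ω ∈ (0, π/2)`, the admissible curve `(M, θ)` has maximal curvature `e ≤ 1/R_a`
and `ζ₀ = 0`, then `e = 1/R_a`, `M = L₀ = R_a Ω + D` and `θ` coincides with the
arc-then-segment angle `φ₀(s) = min(s, R_a Ω)/R_a` on `[0, L₀]`. -/
theorem stmt8 (Ω R_a D b₁ b₂ M : ℝ) (θ : ℝ → ℝ)
    (hΩ : Ω ∈ Set.Ioo 0 (Real.pi / 2)) (hRa : 0 < R_a) (hD : 0 ≤ D)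
    (hb₁ : b₁ = R_a * Real.sin Ω + D * Real.cos Ω)
    (hb₂ : b₂ = R_a * (1 - Real.cos Ω) + D * Real.sin Ω)
    (h : Admissible Ω b₁ b₂ M θ)
    (he : maxCurv θ M ≤ 1 / R_a)
    (hζ : -(xcoord θ (R_a * Ω) - R_a * Real.sin Ω) * Real.sin Ω
      + (ycoord θ (R_a * Ω) - R_a * (1 - Real.cos Ω)) * Real.cos Ω = 0) :
    maxCurv θ M = 1 / R_a ∧ M = R_a * Ω + D ∧
    ∀ s ∈ Set.Icc (0:ℝ) (R_a * Ω + D), θ s = min s (R_a * Ω) / R_a := by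
  obtain ⟨hΩ0, hΩ2⟩ := hΩ
  obtain ⟨hM, hmono, ⟨K₀, hK₀, hLipK₀⟩, hθ0, hθM, hint₁, hint₂⟩ := h
  set l := R_a * Ω with hl
  have hl0 : 0 < l := mul_pos hRa hΩ0
  have hπ : 0 < Real.pi := Real.pi_pos
  have hcosΩ : 0 < Real.cos Ω := Real.cos_pos_of_mem_Ioo ⟨by linarith, hΩ2⟩
  -- the infimum of Lipschitz constants is itself a Lipschitz constant
  have hSne : Set.Nonempty {K : ℝ | 0 ≤ K ∧ LipOn θ M K} := ⟨K₀, hK₀, hLipK₀⟩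
  have hmcLip : LipOn θ M (maxCurv θ M) := by
    intro s hs t ht
    rcases eq_or_ne s t with rfl | hst
    · simp
    · have hst' : (0:ℝ) < |s - t| := abs_pos.mpr (sub_ne_zero.mpr hst)
      have h1 : |θ s - θ t| / |s - t| ≤ maxCurv θ M := by
        apply le_csInf hSne
        intro K hK
        rw [div_le_iff₀ hst']
        exact hK.2 s hs t ht
      calc |θ s - θ t| = |θ s - θ t| / |s - t| * |s - t| := by field_simp
        _ ≤ maxCurv θ M * |s - t| := mul_le_mul_of_nonneg_right h1 hst'.le
  have hLip : LipOn θ M (1 / R_a) := fun s hs t ht =>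
    (hmcLip s hs t ht).trans (mul_le_mul_of_nonneg_right he (abs_nonneg _))
  -- continuity of θ on [0, M]
  have hθcont : ContinuousOn θ (Set.Icc 0 M) := by
    have : LipschitzOnWith (Real.toNNReal (1 / R_a)) θ (Set.Icc 0 M) := by
      rw [lipschitzOnWith_iff_dist_le_mul]
      intro s hs t ht
      rw [Real.dist_eq, Real.dist_eq]
      have := hLip s hs t ht
      rwa [Real.coe_toNNReal _ (by positivity)]
    exact this.continuousOn
  -- l ≤ M
  have hMl : l ≤ M := by
    have := hLip M ⟨hM.le, le_rfl⟩ 0 ⟨le_rfl, hM.le⟩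
    rw [hθM, hθ0, sub_zero, sub_zero, abs_of_pos hΩ0, abs_of_pos hM] at this
    have h3 : R_a * (1 / R_a * M) = M := by field_simp
    have h4 := mul_le_mul_of_nonneg_left this hRa.le
    rw [hl]
    linarith
  -- bounds on θ
  have hθlb : ∀ t ∈ Set.Icc (0:ℝ) M, 0 ≤ θ t := fun t ht => by
    have := hmono (Set.left_mem_Icc.mpr hM.le) ht ht.1
    rwa [hθ0] at this
  have hθub : ∀ t ∈ Set.Icc (0:ℝ) M, θ t ≤ Ω := fun t ht => by
    have := hmono ht (Set.right_mem_Icc.mpr hM.le) ht.2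
    rwa [hθM] at this
  have hsubl : Set.Icc (0:ℝ) l ⊆ Set.Icc (0:ℝ) M := Set.Icc_subset_Icc le_rfl hMl
  have hθle : ∀ t ∈ Set.Icc (0:ℝ) l, θ t ≤ t / R_a := by
    intro t ht
    have h1 := hLip t (hsubl ht) 0 ⟨le_rfl, hM.le⟩
    rw [hθ0, sub_zero, sub_zero, abs_of_nonneg ht.1] at h1
    have h2 : θ t ≤ |θ t| := le_abs_self _
    rw [one_div] at h1
    calc θ t ≤ |θ t| := h2
      _ ≤ R_a⁻¹ * t := h1
      _ = t / R_a := by rw [inv_mul_eq_div]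
  -- continuity of the integrands
  have hθcontl : ContinuousOn θ (Set.Icc 0 l) := hθcont.mono hsubl
  have hcong : ContinuousOn (fun t => Real.sin (θ t - Ω)) (Set.Icc 0 l) :=
    Real.continuous_sin.comp_continuousOn (hθcontl.sub continuousOn_const)
  have hconp : Continuous (fun t : ℝ => Real.sin (t / R_a - Ω)) :=
    Real.continuous_sin.comp ((continuous_id.div_const R_a).sub continuous_const)
  have hsinint : IntervalIntegrable (fun t => Real.sin (θ t)) MeasureTheory.volume 0 l := by
    apply ContinuousOn.intervalIntegrable
    rw [Set.uIcc_of_le hl0.le]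
    exact Real.continuous_sin.comp_continuousOn hθcontl
  have hcosint : IntervalIntegrable (fun t => Real.cos (θ t)) MeasureTheory.volume 0 l := by
    apply ContinuousOn.intervalIntegrable
    rw [Set.uIcc_of_le hl0.le]
    exact Real.continuous_cos.comp_continuousOn hθcontl
  -- value of the model integral
  have I1 : (∫ t in (0:ℝ)..l, Real.sin (t / R_a - Ω)) = R_a * (Real.cos Ω - 1) := by
    have hderiv : ∀ t ∈ Set.uIcc (0:ℝ) l,
        HasDerivAt (fun t => -(R_a * Real.cos (t / R_a - Ω))) (Real.sin (t / R_a - Ω)) t := by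
      intro t _
      have h1 : HasDerivAt (fun t : ℝ => t / R_a - Ω) (1 / R_a) t := by
        simpa using ((hasDerivAt_id t).div_const R_a).sub_const Ω
      have h2 := (h1.cos).const_mul R_a
      have h3 := h2.neg
      exact h3.congr_deriv (by field_simp)
    have := intervalIntegral.integral_eq_sub_of_hasDerivAt hderiv
      (hconp.intervalIntegrable 0 l)
    rw [this]
    have hlR : l / R_a = Ω := by rw [hl]; field_simp
    rw [hlR]
    simp [Real.cos_neg]
    ring
  -- the hypothesis ζ₀ = 0 gives the same value for the curve integral
  have I2 : (∫ t in (0:ℝ)..l, Real.sin (θ t - Ω)) = R_a * (Real.cos Ω - 1) := by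
    have hsplit : (∫ t in (0:ℝ)..l, Real.sin (θ t - Ω))
        = (∫ t in (0:ℝ)..l, Real.sin (θ t)) * Real.cos Ω
          - (∫ t in (0:ℝ)..l, Real.cos (θ t)) * Real.sin Ω := by
      rw [← intervalIntegral.integral_mul_const, ← intervalIntegral.integral_mul_const,
        ← intervalIntegral.integral_sub (hsinint.mul_const _) (hcosint.mul_const _)]
      congr 1
      ext t
      rw [Real.sin_sub]
    rw [xcoord, ycoord] at hζ
    have hpyth := Real.sin_sq_add_cos_sq Ω
    rw [hsplit]
    nlinarith [hζ, hpyth]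
  -- rigidity: θ t = t / R_a on [0, l]
  have hkey : ∀ t ∈ Set.Icc (0:ℝ) l, θ t = t / R_a := by
    by_contra hcon
    push_neg at hcon
    obtain ⟨t₀, ht₀, hne⟩ := hcon
    have hmem : ∀ t ∈ Set.Icc (0:ℝ) l, (θ t - Ω) ∈ Set.Icc (-(Real.pi/2)) (Real.pi/2) := by
      intro t ht
      constructor
      · have := hθlb t (hsubl ht); linarith
      · have := hθub t (hsubl ht); linarith
    have hmem' : ∀ t ∈ Set.Icc (0:ℝ) l, (t / R_a - Ω) ∈ Set.Icc (-(Real.pi/2)) (Real.pi/2) := by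
      intro t ht
      have h1 : 0 ≤ t / R_a := div_nonneg ht.1 hRa.le
      have h2 : t / R_a ≤ Ω := by
        rw [div_le_iff₀ hRa]; rw [hl] at ht; linarith [ht.2]
      constructor <;> linarith
    have hlt : Real.sin (θ t₀ - Ω) < Real.sin (t₀ / R_a - Ω) := by
      apply Real.strictMonoOn_sin (hmem t₀ ht₀) (hmem' t₀ ht₀)
      have := hθle t₀ ht₀
      cases lt_or_eq_of_le this with
      | inl h => linarith
      | inr h => exact absurd h hne
    have hle : ∀ t ∈ Set.Ioc (0:ℝ) l, Real.sin (θ t - Ω) ≤ Real.sin (t / R_a - Ω) := by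
      intro t ht
      have ht' : t ∈ Set.Icc (0:ℝ) l := ⟨ht.1.le, ht.2⟩
      apply Real.strictMonoOn_sin.monotoneOn (hmem t ht') (hmem' t ht')
      have := hθle t ht'
      linarith
    have := intervalIntegral.integral_lt_integral_of_continuousOn_of_le_of_exists_lt hl0
      hcong hconp.continuousOn hle ⟨t₀, ht₀, hlt⟩
    rw [I1, I2] at this
    exact lt_irrefl _ this
  have hθl : θ l = Ω := by
    rw [hkey l ⟨hl0.le, le_rfl⟩, hl]
    field_simp
  -- θ is constant Ω on [l, M]
  have hθconst : ∀ t ∈ Set.Icc l M, θ t = Ω := by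
    intro t ht
    have h1 : θ t ≤ Ω := hθub t ⟨hl0.le.trans ht.1, ht.2⟩
    have h2 : Ω ≤ θ t := by
      have := hmono ⟨hl0.le, hMl⟩ ⟨hl0.le.trans ht.1, ht.2⟩ ht.1
      rwa [hθl] at this
    linarith
  -- compute b₁ to identify M
  have hMeq : M = R_a * Ω + D := by
    have hcosint2 : IntervalIntegrable (fun t => Real.cos (θ t)) MeasureTheory.volume l M := by
      apply ContinuousOn.intervalIntegrable
      rw [Set.uIcc_of_le hMl]
      exact Real.continuous_cos.comp_continuousOn (hθcont.mono (Set.Icc_subset_Icc hl0.le le_rfl))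
    have hsplit := intervalIntegral.integral_add_adjacent_intervals hcosint hcosint2
    have e1 : (∫ t in (0:ℝ)..l, Real.cos (θ t)) = R_a * Real.sin Ω := by
      have hcongr : (∫ t in (0:ℝ)..l, Real.cos (θ t))
          = ∫ t in (0:ℝ)..l, Real.cos (t / R_a) := by
        apply intervalIntegral.integral_congr
        intro t ht
        rw [Set.uIcc_of_le hl0.le] at ht
        simp only [hkey t ht]
      rw [hcongr]
      have hderiv : ∀ t ∈ Set.uIcc (0:ℝ) l,
          HasDerivAt (fun t => R_a * Real.sin (t / R_a)) (Real.cos (t / R_a)) t := by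
        intro t _
        have h1 : HasDerivAt (fun t : ℝ => t / R_a) (1 / R_a) t := by
          simpa using (hasDerivAt_id t).div_const R_a
        have h2 := (h1.sin).const_mul R_a
        exact h2.congr_deriv (by field_simp)
      have hci : Continuous (fun t : ℝ => Real.cos (t / R_a)) :=
        Real.continuous_cos.comp (continuous_id.div_const R_a)
      rw [intervalIntegral.integral_eq_sub_of_hasDerivAt hderiv (hci.intervalIntegrable 0 l)]
      have hlR : l / R_a = Ω := by rw [hl]; field_simp
      rw [hlR]
      simp
    have e2 : (∫ t in l..M, Real.cos (θ t)) = (M - l) * Real.cos Ω := by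
      have hcongr : (∫ t in l..M, Real.cos (θ t)) = ∫ _t in l..M, Real.cos Ω := by
        apply intervalIntegral.integral_congr
        intro t ht
        rw [Set.uIcc_of_le hMl] at ht
        simp only [hθconst t ht]
      rw [hcongr, intervalIntegral.integral_const, smul_eq_mul]
    rw [e1, e2, hint₁, hb₁] at hsplit
    have : (M - l) * Real.cos Ω = D * Real.cos Ω := by linarith
    have hMD : M - l = D := by
      field_simp at this
      exact this
    linarith [hMD]
  -- maxCurv = 1/R_a
  have hmc : maxCurv θ M = 1 / R_a := by
    apply le_antisymm he
    apply le_csInf hSne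
    intro K hK
    have h1 := hK.2 l ⟨hl0.le, hMl⟩ 0 ⟨le_rfl, hM.le⟩
    rw [hθl, hθ0, sub_zero, sub_zero, abs_of_pos hΩ0, abs_of_pos hl0, hl] at h1
    rw [div_le_iff₀ hRa]
    nlinarith
  refine ⟨hmc, hMeq, ?_⟩
  intro s hs
  have hMeq' : M = l + D := by rw [hl]; exact hMeq
  have hsM : s ≤ M := by
    have := hs.2
    linarith [hMeq']
  rcases le_or_gt s l with hsl | hsl
  · rw [min_eq_left hsl, hkey s ⟨hs.1, hsl⟩]
  · rw [min_eq_right hsl.le, hθconst s ⟨hsl.le, hsM⟩, hl, mul_comm, mul_div_assoc,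
      div_self (ne_of_gt hRa), mul_one]
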